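/- arXiv:2204.08428 — 2 statements merged into one kernel-verified Lean document; each statement's English description precedes it below -/
import Mathlib

section
/- Let C be a self-homothetic attractor as in the context, with system of balls S_I := f_{i₁} ∘ ⋯ ∘ f_{i_k}(B[0,1]), and assume h_∅ := max_{x ∈ B[0,1]} dist(x, C) > 0. Then the thickness satisfies τ(C, {S_I}) ≥ (min_j λ_j) / h_∅. -/
open Metric Set
open scoped ENNReal

/-- Composition `f_{i₁} ∘ ⋯ ∘ f_{i_k}` of the maps of an IFS along the word `I`. -/
def wordMap {E : Type*} {K : Type*} (f : K → E → E) (I : List K) : E → E :=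
  (I.map f).foldl (· ∘ ·) id

private lemma foldl_comp_aux {α : Type*} (l : List (α → α)) (g : α → α) :
    l.foldl (· ∘ ·) g = g ∘ l.foldl (· ∘ ·) id := by
  induction l generalizing g with
  | nil => rfl
  | cons a l ih =>
    simp only [List.foldl_cons]
    rw [ih (g ∘ a), ih (id ∘ a)]
    rfl

lemma wordMap_cons {E K : Type*} (f : K → E → E) (i : K) (I : List K) :
    wordMap f (i :: I) = f i ∘ wordMap f I := by
  unfold wordMap
  rw [List.map_cons, List.foldl_cons, foldl_comp_aux]
  rfl

/-- For a self-homothetic attractor `C` with system of balls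
`S_I = f_{i₁} ∘ ⋯ ∘ f_{i_k}(B[0,1])` (so `rad S_I = λ_I = λ_{i₁}⋯λ_{i_k}`) and
`h_∅ := max_{x ∈ B[0,1]} dist(x,C) > 0`, the thickness
`τ(C,{S_I}) = inf_I (min_i rad S_{I,i})/h_{S_I}` is at least `(min_j λ_j)/h_∅`. -/
theorem thickness_ge {E : Type*} [NormedAddCommGroup E] [NormedSpace ℝ E]
    [FiniteDimensional ℝ E]
    (m : ℕ) (hm : 0 < m) (lam : Fin m → ℝ) (t : Fin m → E)
    (hlam : ∀ i, lam i ∈ Set.Ioo (0 : ℝ) 1)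
    (hsub : ∀ i, closedBall (t i) (lam i) ⊆ closedBall (0 : E) 1)
    (C : Set E) (hCc : IsCompact C) (hCne : C.Nonempty)
    (hC : C = ⋃ i, (fun x => lam i • x + t i) '' C)
    (hpos : 0 < ⨆ x ∈ closedBall (0 : E) 1, infDist x C) :
    ENNReal.ofReal ((⨅ j, lam j) / (⨆ x ∈ closedBall (0 : E) 1, infDist x C))
      ≤ ⨅ I : List (Fin m),
          ENNReal.ofReal (⨅ i : Fin m, ((I ++ [i]).map lam).prod) /
            ENNReal.ofReal (⨆ x ∈ wordMap (fun i x => lam i • x + t i) I ''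
              closedBall (0 : E) 1, infDist x C) := by
  haveI : Nonempty (Fin m) := ⟨⟨0, hm⟩⟩
  set f : Fin m → E → E := fun i x => lam i • x + t i with hf
  set h0 : ℝ := ⨆ x ∈ closedBall (0 : E) 1, infDist x C with hh0
  -- each map contracts C into itself
  have hfC : ∀ i, f i '' C ⊆ C := by
    intro i
    conv_rhs => rw [hC]
    exact subset_iUnion (fun i => f i '' C) i
  have hdist : ∀ (i : Fin m) (x y : E), dist (f i x) (f i y) = lam i * dist x y := by
    intro i x y
    simp only [hf]
    rw [dist_add_right, dist_smul₀, Real.norm_eq_abs, abs_of_pos (hlam i).1]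
  -- key induction on words
  have key : ∀ I : List (Fin m),
      (∀ x y, dist (wordMap f I x) (wordMap f I y) = (I.map lam).prod * dist x y) ∧
      wordMap f I '' C ⊆ C := by
    intro I
    induction I with
    | nil =>
      constructor
      · intro x y; simp [wordMap]
      · simp [wordMap]
    | cons i I ih =>
      rw [wordMap_cons]
      constructor
      · intro x y
        simp only [Function.comp_apply, hdist, ih.1, List.map_cons, List.prod_cons]
        ring
      · rw [image_comp]
        exact (image_mono (f := f i) ih.2).trans (hfC i)
  -- positivity of the word ratios
  have hlamprod : ∀ I : List (Fin m), 0 < (I.map lam).prod := by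
    intro I
    apply List.prod_pos
    intro a ha
    obtain ⟨i, _, rfl⟩ := List.mem_map.mp ha
    exact (hlam i).1
  -- bound on infDist over the unit ball
  obtain ⟨z, hz, hzmax⟩ := (isCompact_closedBall (0 : E) 1).exists_isMaxOn
    ⟨0, by simp⟩ (continuous_infDist_pt C).continuousOn
  set M : ℝ := infDist z C with hM
  have hM0 : (0 : ℝ) ≤ M := infDist_nonneg
  have hbdd : BddAbove (range fun x => ⨆ _ : x ∈ closedBall (0 : E) 1, infDist x C) := by
    refine ⟨M, ?_⟩
    rintro _ ⟨x, rfl⟩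
    exact Real.iSup_le (fun hx => hzmax hx) hM0
  have hle_h0 : ∀ y ∈ closedBall (0 : E) 1, infDist y C ≤ h0 := by
    intro y hy
    have h1 : infDist y C = ⨆ _ : y ∈ closedBall (0 : E) 1, infDist y C := by
      haveI : Nonempty (y ∈ closedBall (0 : E) 1) := ⟨hy⟩
      exact (ciSup_const).symm
    rw [hh0, h1]
    exact le_ciSup hbdd y
  have h0nn : (0 : ℝ) ≤ h0 := le_trans infDist_nonneg (hle_h0 0 (by simp))
  have hminnn : (0 : ℝ) ≤ ⨅ j, lam j := le_ciInf fun j => (hlam j).1.le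
  refine le_iInf fun I => ?_
  set lI : ℝ := (I.map lam).prod with hlI
  have hlIpos : 0 < lI := hlamprod I
  -- bound on h_I
  have hSI : (⨆ x ∈ wordMap f I '' closedBall (0 : E) 1, infDist x C) ≤ lI * h0 := by
    have hnn : (0 : ℝ) ≤ lI * h0 := mul_nonneg hlIpos.le h0nn
    refine Real.iSup_le (fun x => Real.iSup_le (fun hx => ?_) hnn) hnn
    obtain ⟨y, hy, rfl⟩ := hx
    obtain ⟨c, hcC, hdc⟩ := hCc.exists_infDist_eq_dist hCne y
    calc infDist (wordMap f I y) C ≤ dist (wordMap f I y) (wordMap f I c) :=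
          infDist_le_dist_of_mem ((key I).2 (mem_image_of_mem _ hcC))
      _ = lI * dist y c := (key I).1 y c
      _ = lI * infDist y C := by rw [hdc]
      _ ≤ lI * h0 := mul_le_mul_of_nonneg_left (hle_h0 y hy) hlIpos.le
  -- bound on the numerator
  have hnum : lI * (⨅ j, lam j) ≤ ⨅ i : Fin m, ((I ++ [i]).map lam).prod := by
    refine le_ciInf fun i => ?_
    have h1 : ((I ++ [i]).map lam).prod = lI * lam i := by
      simp [List.map_append, List.prod_append, hlI]
    rw [h1]
    exact mul_le_mul_of_nonneg_left (ciInf_le (Finite.bddBelow_range _) i) hlIpos.le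
  -- assemble in ℝ≥0∞
  have hlI0 : ENNReal.ofReal lI ≠ 0 := by
    simp [ENNReal.ofReal_eq_zero, not_le, hlIpos]
  calc ENNReal.ofReal ((⨅ j, lam j) / h0)
      = ENNReal.ofReal (⨅ j, lam j) / ENNReal.ofReal h0 := ENNReal.ofReal_div_of_pos hpos
    _ = ENNReal.ofReal lI * ENNReal.ofReal (⨅ j, lam j) /
        (ENNReal.ofReal lI * ENNReal.ofReal h0) :=
          (ENNReal.mul_div_mul_left _ _ hlI0 ENNReal.ofReal_ne_top).symm
    _ = ENNReal.ofReal (lI * (⨅ j, lam j)) / ENNReal.ofReal (lI * h0) := by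
          rw [ENNReal.ofReal_mul hlIpos.le, ENNReal.ofReal_mul hlIpos.le]
    _ ≤ ENNReal.ofReal (⨅ i : Fin m, ((I ++ [i]).map lam).prod) /
        ENNReal.ofReal (⨆ x ∈ wordMap f I '' closedBall (0 : E) 1, infDist x C) :=
          ENNReal.div_le_div (ENNReal.ofReal_le_ofReal hnum) (ENNReal.ofReal_le_ofReal hSI)
end

section
/- Let C ⊆ B_∞[0,1] ⊆ ℝ^d be a compact set with a system of balls {S_I} in the ℓ^∞ norm, S_I = B_∞[z_I, r_I] with S_∅ ⊆ B_∞[0,1], and assume min_j r_{I,j} ≥ λ r_I for some λ > 0 and all words I and children j. Let ε ∈ (0,1) and let f be a C¹ map on an open neighborhood of B_∞[0,1] in ℝ^d, with values in ℝ^d, such that ‖Df(x) − Id‖_∞ < ε for all x ∈ B_∞[0,1], where ‖A‖_∞ := max_{1 ≤ i ≤ d} ∑_{j=1}^d |A_{ij}| is the operator norm induced by the ℓ^∞ norm. Then the balls R_I := B_∞[f(z_I), (1 + ε) r_I] form a system of balls for the compact set f(C), and τ(f(C), {R_I}) ≥ τ(C, {S_I}) / (1 + τ(C, {S_I}) ·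 2ε/((1 + ε)λ)). -/
open Metric Set Filter
open scoped ENNReal

/-- A system of balls in a normed space: closed balls indexed by finite words of
natural numbers, each ball containing its finitely many (at least one) children,
with radii tending to zero along infinite words. -/
structure BallSystem (E : Type*) [NormedAddCommGroup E] where
  center : List ℕ → E
  radius : List ℕ → ℝ
  numChildren : List ℕ → ℕ
  radius_pos : ∀ I, 0 < radius I
  numChildren_pos : ∀ I, 0 < numChildren I
  child_subset : ∀ I, ∀ i < numChildren I,
    Metric.closedBall (center (I ++ [i])) (radius (I ++ [i])) ⊆
      Metric.closedBall (center I) (radius I)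
  radius_tendsto : ∀ ω : ℕ → ℕ,
    Filter.Tendsto (fun n => radius (List.ofFn fun k : Fin n => ω k)) Filter.atTop (nhds 0)

namespace BallSystem

variable {E : Type*} [NormedAddCommGroup E]

/-- The ball with index `I`. -/
def ball (B : BallSystem E) (I : List ℕ) : Set E :=
  Metric.closedBall (B.center I) (B.radius I)

/-- A word is valid if each letter indexes an actual child of the preceding prefix. -/
def valid (B : BallSystem E) (I : List ℕ) : Prop :=
  ∀ n : Fin I.length, I.get n < B.numChildren (I.take n.1)

/-- `B` is a system of balls for the set `C`: `C = ⋂_n ⋃_{|I| = n} S_I`. -/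
def IsSystemFor (B : BallSystem E) (C : Set E) : Prop :=
  C = ⋂ n : ℕ, ⋃ I ∈ {I : List ℕ | B.valid I ∧ I.length = n}, B.ball I

/-- `h_I := max_{x ∈ S_I} dist (x, C)`. -/
noncomputable def h (B : BallSystem E) (C : Set E) (I : List ℕ) : ℝ :=
  ⨆ x ∈ B.ball I, infDist x C

/-- The minimum of the radii of the children of `S_I`. -/
noncomputable def minChildRadius (B : BallSystem E) (I : List ℕ) : ℝ :=
  ⨅ i : Fin (B.numChildren I), B.radius (I ++ [i.1])

/-- The thickness of `C` associated to the system of balls `B`, with values in `[0, ∞]`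
(the ratio `min_i rad S_{I,i} / h_I` being interpreted as `∞` when `h_I = 0`). -/
noncomputable def thickness (B : BallSystem E) (C : Set E) : ℝ≥0∞ :=
  ⨅ I : {I : List ℕ // B.valid I},
    ENNReal.ofReal (B.minChildRadius I.1) / ENNReal.ofReal (B.h C I.1)

/-- The system is `r`-uniformly dense: every closed ball contained in `S_I` with radius
at least `r · rad S_I` contains a child of `S_I`. -/
def UniformlyDense (B : BallSystem E) (r : ℝ) : Prop :=
  ∀ I, B.valid I → ∀ (x : E) (ρ : ℝ), Metric.closedBall x ρ ⊆ B.ball I →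
    r * B.radius I ≤ ρ → ∃ i < B.numChildren I, B.ball (I ++ [i]) ⊆ Metric.closedBall x ρ

end BallSystem

open scoped Classical

namespace BallSystem

variable {E : Type*} [NormedAddCommGroup E]

lemma valid_nil (B : BallSystem E) : B.valid ([] : List ℕ) := by
  intro n; exact absurd n.2 (by simp)

lemma valid_take {B : BallSystem E} {I : List ℕ} (h : B.valid I) (n : ℕ) :
    B.valid (I.take n) := by
  intro k
  have hk2 : (k : ℕ) < min n I.length := by simpa [List.length_take] using k.2
  have hk : (k : ℕ) < I.length := by omega
  have h1 : (I.take n).get k = I.get ⟨k, hk⟩ := by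
    simp [List.get_eq_getElem, List.getElem_take]
  have h2 : (I.take n).take (k : ℕ) = I.take (k : ℕ) := by
    rw [List.take_take]
    congr 1
    omega
  rw [h1, h2]
  exact h ⟨k, hk⟩

lemma valid_append_iff {B : BallSystem E} {I : List ℕ} {i : ℕ} :
    B.valid (I ++ [i]) ↔ B.valid I ∧ i < B.numChildren I := by
  constructor
  · intro h
    refine ⟨?_, ?_⟩
    · have := valid_take h I.length
      simpa [List.take_left] using this
    · have := h ⟨I.length, by simp⟩
      simpa [List.get_eq_getElem, List.take_left] using this
  · rintro ⟨h1, h2⟩ k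
    have hk : (k : ℕ) < I.length + 1 := by simpa using k.2
    rcases lt_or_eq_of_le (Nat.lt_succ_iff.mp hk) with hlt | heq
    · have hget : (I ++ [i]).get k = I.get ⟨k, hlt⟩ := by
        simp [List.get_eq_getElem, List.getElem_append_left hlt]
      have htake : (I ++ [i]).take (k : ℕ) = I.take (k : ℕ) :=
        List.take_append_of_le_length (le_of_lt hlt)
      rw [hget, htake]
      exact h1 ⟨k, hlt⟩
    · have hget : (I ++ [i]).get k = i := by
        simp [List.get_eq_getElem, heq]
      have htake : (I ++ [i]).take (k : ℕ) = I := by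
        rw [heq, List.take_left]
      rw [hget, htake]
      exact h2

lemma ball_mono_append {B : BallSystem E} {I : List ℕ} {i : ℕ}
    (h : B.valid (I ++ [i])) : B.ball (I ++ [i]) ⊆ B.ball I :=
  B.child_subset I i (valid_append_iff.mp h).2

lemma ball_subset_take {B : BallSystem E} {I : List ℕ} (h : B.valid I) (n : ℕ) :
    B.ball I ⊆ B.ball (I.take n) := by
  induction I using List.reverseRecOn with
  | nil => simp
  | append_singleton J i ih =>
    rcases le_or_gt (J.length + 1) n with hn | hn
    · rw [List.take_of_length_le (by simpa using hn)]
    · have hJ : B.valid J := (valid_append_iff.mp h).1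
      have hn' : n ≤ J.length := by omega
      rw [List.take_append_of_le_length hn']
      exact (ball_mono_append h).trans (ih hJ)

lemma ball_subset_prefix {B : BallSystem E} {I J : List ℕ} (h : B.valid J)
    (hIJ : I <+: J) : B.ball J ⊆ B.ball I := by
  have : I = J.take I.length := (List.prefix_iff_eq_take.mp hIJ)
  rw [this]
  exact ball_subset_take h _

lemma center_mem_ball (B : BallSystem E) (I : List ℕ) : B.center I ∈ B.ball I :=
  Metric.mem_closedBall_self (B.radius_pos I).le

end BallSystem

namespace BallSystem

variable {E : Type*} [NormedAddCommGroup E]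

lemma ball_chain {B : BallSystem E} {J : ℕ → List ℕ}
    (hstep : ∀ n, ∃ i, J (n + 1) = J n ++ [i]) (hval : ∀ n, B.valid (J n))
    {n m : ℕ} (hnm : n ≤ m) : B.ball (J m) ⊆ B.ball (J n) := by
  induction m with
  | zero => simp_all
  | succ m ih =>
    rcases eq_or_lt_of_le hnm with h | h
    · rw [h]
    · obtain ⟨i, hi⟩ := hstep m
      refine subset_trans ?_ (ih (Nat.lt_succ_iff.mp h))
      rw [hi]
      exact ball_mono_append (by rw [← hi]; exact hval (m + 1))

/-- The fundamental branch lemma: along an infinite valid branch, the centers converge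
to a point of `C` lying in all balls of the branch, and the radii tend to `0`. -/
lemma branch_limit [CompleteSpace E] {B : BallSystem E} {C : Set E}
    (hB : B.IsSystemFor C) (J : ℕ → List ℕ) (hlen : ∀ n, (J n).length = n)
    (hstep : ∀ n, ∃ i, J (n + 1) = J n ++ [i]) (hval : ∀ n, B.valid (J n)) :
    ∃ x ∈ C, (∀ n, x ∈ B.ball (J n)) ∧
      Filter.Tendsto (fun n => B.radius (J n)) Filter.atTop (nhds 0) := by
  classical
  set ω : ℕ → ℕ := fun n => (J (n + 1)).getD n 0 with hω
  have hJof : ∀ n, J n = List.ofFn (fun k : Fin n => ω k) := by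
    intro n
    induction n with
    | zero => exact List.length_eq_zero_iff.mp (hlen 0)
    | succ n ih =>
      obtain ⟨i, hi⟩ := hstep n
      have hωn : ω n = i := by
        have : (J n ++ [i]).getD n 0 = i := by
          simp [List.getD_eq_getElem?_getD, List.getElem?_append_right, hlen n]
        simpa [hω, hi] using this
      have : (List.ofFn fun k : Fin (n + 1) => ω k) =
          (List.ofFn fun k : Fin n => ω k) ++ [ω n] := by
        rw [List.ofFn_succ']
        simp [List.concat_eq_append, Fin.last]
      rw [hi, this, ← ih, hωn]
  have hrad : Filter.Tendsto (fun n => B.radius (J n)) Filter.atTop (nhds 0) := by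
    have := B.radius_tendsto ω
    refine this.congr fun n => ?_
    rw [← hJof n]
  -- Cauchy sequence of centers
  have hc : CauchySeq (fun n => B.center (J n)) := by
    apply cauchySeq_of_le_tendsto_0 (fun n => 2 * B.radius (J n))
    · intro n m N hn hm
      have h1 : B.center (J n) ∈ B.ball (J N) :=
        ball_chain hstep hval hn (B.center_mem_ball _)
      have h2 : B.center (J m) ∈ B.ball (J N) :=
        ball_chain hstep hval hm (B.center_mem_ball _)
      calc dist (B.center (J n)) (B.center (J m))
          ≤ dist (B.center (J n)) (B.center (J N)) +
            dist (B.center (J m)) (B.center (J N)) := dist_triangle_right _ _ _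
        _ ≤ B.radius (J N) + B.radius (J N) := add_le_add h1 h2
        _ = 2 * B.radius (J N) := by ring
    · simpa using hrad.const_mul 2
  obtain ⟨x, hx⟩ := cauchySeq_tendsto_of_complete hc
  have hxball : ∀ n, x ∈ B.ball (J n) := by
    intro n
    refine Metric.isClosed_closedBall.mem_of_tendsto hx ?_
    filter_upwards [Filter.eventually_ge_atTop n] with m hm
    exact ball_chain hstep hval hm (B.center_mem_ball _)
  refine ⟨x, ?_, hxball, hrad⟩
  rw [hB]
  refine Set.mem_iInter.mpr fun n => ?_
  exact Set.mem_biUnion ⟨hval n, hlen n⟩ (hxball n)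

/-- `C` is nonempty when `B` is a system for it. -/
lemma nonempty_of_isSystemFor [CompleteSpace E] {B : BallSystem E} {C : Set E}
    (hB : B.IsSystemFor C) : C.Nonempty := by
  obtain ⟨x, hx, -⟩ := branch_limit hB (fun n => List.replicate n 0)
    (fun n => List.length_replicate (n := n) (a := 0))
    (fun n => ⟨0, by simpa using List.replicate_succ' (n := n) (a := 0)⟩)
    (fun n => by
      induction n with
      | zero => exact B.valid_nil
      | succ n ih =>
        show B.valid (List.replicate (n+1) 0)
        rw [List.replicate_succ' (n := n) (a := 0)]
        exact valid_append_iff.mpr ⟨ih, B.numChildren_pos _⟩)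
  exact ⟨x, hx⟩

end BallSystem

namespace BallSystem

variable {E : Type*} [NormedAddCommGroup E]

/-- König's lemma for the finitely branching tree of valid words. -/
lemma konig (B : BallSystem E) (T : Set (List ℕ))
    (hvalid : ∀ I ∈ T, B.valid I)
    (hclosed : ∀ I ∈ T, ∀ n, I.take n ∈ T)
    (hlevels : ∀ n, ∃ I ∈ T, I.length = n) :
    ∃ J : ℕ → List ℕ, (∀ n, (J n).length = n) ∧
      (∀ n, ∃ i, J (n + 1) = J n ++ [i]) ∧ (∀ n, J n ∈ T) := by
  classical
  set good : List ℕ → Prop :=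
    fun I => ∀ n, ∃ J ∈ T, I <+: J ∧ J.length = I.length + n with hgood
  -- good is inherited by cutting long witnesses
  have hmono : ∀ (I : List ℕ) (n m : ℕ), n ≤ m →
      (∃ J ∈ T, I <+: J ∧ J.length = I.length + m) →
      (∃ J ∈ T, I <+: J ∧ J.length = I.length + n) := by
    rintro I n m hnm ⟨J, hJT, hpre, hlen⟩
    refine ⟨J.take (I.length + n), hclosed J hJT _, ?_, ?_⟩
    · rw [List.prefix_take_iff]
      exact ⟨hpre, Nat.le_add_right _ _⟩
    · rw [List.length_take, hlen]
      omega
  have hgood_nil : good [] := by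
    intro n
    obtain ⟨J, hJT, hlen⟩ := hlevels n
    exact ⟨J, hJT, List.nil_prefix, by simpa using hlen⟩
  have hstep : ∀ I : List ℕ, good I → ∃ i, good (I ++ [i]) ∧ (I ++ [i]) ∈ T := by
    intro I hI
    by_contra hcon
    push_neg at hcon
    -- for each i, either not good or not in T; we first show:
    -- it suffices that each i < numChildren I fails "good" at some level
    have hbadP : ∀ i, ¬ good (I ++ [i]) ∨ (I ++ [i]) ∉ T := by
      intro i
      by_cases h : good (I ++ [i])
      · exact Or.inr (hcon i h)
      · exact Or.inl h
    -- if good (I++[i]) fails then there is a threshold level with no witnesses above it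
    have hthresh : ∀ i, ∃ N, ∀ m, N ≤ m →
        ¬ ∃ J ∈ T, (I ++ [i]) <+: J ∧ J.length = I.length + 1 + m := by
      intro i
      rcases hbadP i with h | h
      · obtain ⟨N, hN⟩ := not_forall.mp h
        refine ⟨N, fun m hm hex => ?_⟩
        apply hN
        obtain ⟨J, hJ⟩ := hmono (I ++ [i]) N m hm (by
          obtain ⟨J, h1, h2, h3⟩ := hex
          exact ⟨J, h1, h2, by simp [h3]⟩)
        exact ⟨J, hJ.1, hJ.2.1, by simp [hJ.2.2]⟩
      · -- I ++ [i] not in T: no witnesses at all (cut any witness down)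
        refine ⟨0, fun m _ hex => h ?_⟩
        obtain ⟨J, hJT, hpre, hlen⟩ := hex
        have : (I ++ [i]) = J.take (I.length + 1) := by
          have := List.prefix_iff_eq_take.mp hpre
          simpa using this
        rw [this]
        exact hclosed J hJT _
    choose Nf hNf using hthresh
    set N := (Finset.range (B.numChildren I)).sup Nf with hN
    -- use goodness of I at level N+1
    obtain ⟨J, hJT, hpre, hlen⟩ := hI (1 + N)
    obtain ⟨rest, rfl⟩ := hpre
    have hrest : ∃ r0 rest', rest = r0 :: rest' := by
      cases rest with
      | nil => exfalso; simp at hlen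
      | cons r0 rest' => exact ⟨r0, rest', rfl⟩
    obtain ⟨r0, rest', rfl⟩ := hrest
    -- r0 < numChildren I
    have hval := hvalid _ hJT
    have hr0 : r0 < B.numChildren I := by
      have hlt : I.length < (I ++ r0 :: rest').length := by simp
      have h2 := hval ⟨I.length, hlt⟩
      have h3 : (I ++ r0 :: rest').get ⟨I.length, hlt⟩ = r0 := by
        simp [List.get_eq_getElem, List.getElem_append_right]
      have h4 : (I ++ r0 :: rest').take I.length = I := List.take_left ..
      rwa [h3, h4] at h2
    -- I ++ [r0] is a prefix of J
    have hpre2 : (I ++ [r0]) <+: (I ++ r0 :: rest') := by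
      exact ⟨rest', by simp⟩
    -- contradiction with the threshold for r0
    have hNle : Nf r0 ≤ N := Finset.le_sup (Finset.mem_range.mpr hr0)
    refine hNf r0 rest'.length (le_trans hNle ?_) ⟨_, hJT, hpre2, ?_⟩
    · have : (I ++ r0 :: rest').length = I.length + 1 + rest'.length := by simp; omega
      omega
    · simp; omega
  -- build the branch by recursion
  have hTnil : ([] : List ℕ) ∈ T := by
    obtain ⟨I, hIT, hlen⟩ := hlevels 0
    rwa [List.length_eq_zero_iff.mp hlen] at hIT
  let F : ℕ → {I : List ℕ // good I ∧ I ∈ T} := fun n =>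
    Nat.rec ⟨[], hgood_nil, hTnil⟩
      (fun _ p => ⟨p.1 ++ [Classical.choose (hstep p.1 p.2.1)],
        (Classical.choose_spec (hstep p.1 p.2.1)).1,
        (Classical.choose_spec (hstep p.1 p.2.1)).2⟩) n
  refine ⟨fun n => (F n).1, ?_, fun n => ⟨_, rfl⟩, fun n => (F n).2.2⟩
  intro n
  induction n with
  | zero => rfl
  | succ n ih => simpa [F] using ih

end BallSystem

namespace BallSystem

variable {E : Type*} [NormedAddCommGroup E]

private lemma findGreatest_congr {P Q : ℕ → Prop} [DecidablePred P] [DecidablePred Q]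
    {n : ℕ} (h : ∀ m ≤ n, (P m ↔ Q m)) :
    Nat.findGreatest P n = Nat.findGreatest Q n := by
  induction n with
  | zero => rfl
  | succ n ih =>
    rw [Nat.findGreatest_succ, Nat.findGreatest_succ]
    by_cases hp : P (n + 1)
    · rw [if_pos hp, if_pos ((h (n + 1) le_rfl).mp hp)]
    · rw [if_neg hp, if_neg (fun hq => hp ((h (n + 1) le_rfl).mpr hq)),
        ih (fun m hm => h m (le_trans hm (Nat.le_succ n)))]

open scoped Classical in
/-- The longest valid prefix of a word. -/
noncomputable def trunc (B : BallSystem E) (I : List ℕ) : List ℕ :=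
  I.take (Nat.findGreatest (fun n => B.valid (I.take n)) I.length)

lemma trunc_valid (B : BallSystem E) (I : List ℕ) : B.valid (B.trunc I) := by
  classical
  rw [trunc]
  exact Nat.findGreatest_spec (P := fun n => B.valid (I.take n)) (Nat.zero_le _) (by simpa using B.valid_nil)

lemma trunc_of_valid (B : BallSystem E) {I : List ℕ} (h : B.valid I) : B.trunc I = I := by
  classical
  rw [trunc]
  have h1 : Nat.findGreatest (fun n => B.valid (I.take n)) I.length = I.length :=
    le_antisymm (Nat.findGreatest_le _)
      (Nat.le_findGreatest le_rfl (by simpa using h))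
  rw [h1, List.take_length]

lemma trunc_length_le (B : BallSystem E) (I : List ℕ) : (B.trunc I).length ≤ I.length := by
  rw [trunc, List.length_take]
  omega

lemma trunc_append_of_not_valid (B : BallSystem E) {I : List ℕ} (h : ¬ B.valid I) (i : ℕ) :
    B.trunc (I ++ [i]) = B.trunc I := by
  classical
  rw [trunc, trunc]
  have hlen : (I ++ [i]).length = I.length + 1 := by simp
  have hnv : ¬ B.valid ((I ++ [i]).take (I.length + 1)) := by
    rw [List.take_of_length_le (by simp)]
    intro hv
    exact h (valid_append_iff.mp hv).1
  have hcongr : Nat.findGreatest (fun n => B.valid ((I ++ [i]).take n)) I.length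
      = Nat.findGreatest (fun n => B.valid (I.take n)) I.length :=
    findGreatest_congr (fun m hm => by rw [List.take_append_of_le_length hm])
  have hFG : Nat.findGreatest (fun n => B.valid ((I ++ [i]).take n)) (I.length + 1)
      = Nat.findGreatest (fun n => B.valid (I.take n)) I.length := by
    rw [Nat.findGreatest_succ, if_neg hnv, hcongr]
  rw [hlen, hFG]
  have hle : Nat.findGreatest (fun n => B.valid (I.take n)) I.length ≤ I.length :=
    Nat.findGreatest_le _
  rw [List.take_append_of_le_length hle]

end BallSystem

section NormedHelpers

variable {E : Type*} [NormedAddCommGroup E] [NormedSpace ℝ E]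

/-- In a nontrivial normed space, ball inclusion forces the distance-plus-radius bound. -/
lemma closedBall_subset_closedBall_dist [Nontrivial E] {x y : E} {r R : ℝ} (hr : 0 < r)
    (h : Metric.closedBall x r ⊆ Metric.closedBall y R) : dist x y + r ≤ R := by
  obtain ⟨w, hw⟩ := exists_ne (0 : E)
  by_cases hxy : x = y
  · subst hxy
    set u : E := ‖w‖⁻¹ • w with hu
    have hnu : ‖u‖ = 1 := by
      rw [hu, norm_smul, norm_inv, norm_norm, inv_mul_cancel₀ (norm_ne_zero_iff.mpr hw)]
    have hp : x + r • u ∈ Metric.closedBall x r := by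
      simp [dist_eq_norm, norm_smul, hnu, abs_of_pos hr]
    have := h hp
    rw [Metric.mem_closedBall, dist_eq_norm] at this
    simp only [add_sub_cancel_left] at this
    rw [norm_smul, hnu, mul_one, Real.norm_eq_abs, abs_of_pos hr] at this
    simpa using this
  · set v : E := x - y with hv
    have hvne : v ≠ 0 := sub_ne_zero_of_ne hxy
    have hnv : (0:ℝ) < ‖v‖ := norm_pos_iff.mpr hvne
    set p : E := x + (r / ‖v‖) • v with hp
    have hpmem : p ∈ Metric.closedBall x r := by
      rw [Metric.mem_closedBall, dist_eq_norm, hp]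
      simp only [add_sub_cancel_left]
      rw [norm_smul, Real.norm_eq_abs, abs_of_pos (by positivity)]
      rw [div_mul_cancel₀ _ (ne_of_gt hnv)]
    have := h hpmem
    rw [Metric.mem_closedBall, dist_eq_norm] at this
    have hkey : p - y = (1 + r / ‖v‖) • v := by
      rw [hp, hv]; module
    rw [hkey, norm_smul, Real.norm_eq_abs, abs_of_pos (by positivity)] at this
    have : ‖v‖ + r ≤ R := by
      rw [add_mul, one_mul, div_mul_cancel₀ _ (ne_of_gt hnv)] at this
      linarith
    rw [dist_eq_norm]
    exact this

end NormedHelpers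

namespace BallSystem

variable {E : Type*} [NormedAddCommGroup E]

lemma bddAbove_h (B : BallSystem E) (C : Set E) (I : List ℕ) :
    BddAbove (Set.range fun x => ⨆ _ : x ∈ B.ball I, infDist x C) := by
  refine ⟨max 0 (infDist (B.center I) C + B.radius I), ?_⟩
  rintro a ⟨x, rfl⟩
  show (⨆ _ : x ∈ B.ball I, infDist x C) ≤ _
  by_cases hx : x ∈ B.ball I
  · have h1 : (⨆ _ : x ∈ B.ball I, infDist x C) = infDist x C := ciSup_pos hx
    rw [h1]
    refine le_max_of_le_right ?_
    calc infDist x C ≤ infDist (B.center I) C + dist x (B.center I) :=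
          infDist_le_infDist_add_dist
      _ ≤ infDist (B.center I) C + B.radius I := by
          have hx' : dist x (B.center I) ≤ B.radius I := hx
          linarith
  · have h1 : (⨆ _ : x ∈ B.ball I, infDist x C) = 0 := by
      haveI : IsEmpty (x ∈ B.ball I) := ⟨hx⟩
      exact Real.iSup_of_isEmpty _
    rw [h1]
    exact le_max_left _ _

lemma infDist_le_h {B : BallSystem E} {C : Set E} {I : List ℕ} {x : E}
    (hx : x ∈ B.ball I) : infDist x C ≤ B.h C I := by
  have := le_ciSup (B.bddAbove_h C I) x
  rwa [ciSup_pos hx] at this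

lemma h_nonneg (B : BallSystem E) (C : Set E) (I : List ℕ) : 0 ≤ B.h C I :=
  Real.iSup_nonneg fun _ => Real.iSup_nonneg fun _ => infDist_nonneg

lemma h_le {B : BallSystem E} {C : Set E} {I : List ℕ} {a : ℝ} (ha : 0 ≤ a)
    (hb : ∀ x ∈ B.ball I, infDist x C ≤ a) : B.h C I ≤ a := by
  refine Real.iSup_le (fun x => ?_) ha
  by_cases hx : x ∈ B.ball I
  · rw [ciSup_pos hx]; exact hb x hx
  · haveI : IsEmpty (x ∈ B.ball I) := ⟨hx⟩
    rw [Real.iSup_of_isEmpty _]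
    exact ha

end BallSystem

set_option maxHeartbeats 2000000 in
/-- Let `C ⊆ B_∞[0,1] ⊆ ℝ^d` be compact with a system of balls
`S_I = B_∞[z_I, r_I]` (in the `ℓ^∞` norm, which is the norm of `Fin d → ℝ`), with
`S_∅ ⊆ B_∞[0,1]` and `min_j r_{I,j} ≥ λ r_I`. Let `ε ∈ (0,1)` and let `f` be `C¹` on an
open neighborhood of `B_∞[0,1]` with `‖Df(x) - Id‖ < ε` on `B_∞[0,1]` (operator norm
induced by the `ℓ^∞` norm, i.e. the maximal absolute row sum). Then the balls
`R_I = B_∞[f(z_I), (1+ε)r_I]` form a system of balls for `f(C)` and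
`τ(f(C), {R_I}) ≥ τ(C, {S_I}) / (1 + τ(C, {S_I})·2ε/((1+ε)λ))`. -/
theorem thickness_image_C1 (d : ℕ) (hd : 1 ≤ d)
    (C : Set (Fin d → ℝ)) (hCc : IsCompact C)
    (hCsub : C ⊆ Metric.closedBall (0 : Fin d → ℝ) 1)
    (B : BallSystem (Fin d → ℝ)) (hB : B.IsSystemFor C)
    (hroot : B.ball [] ⊆ Metric.closedBall (0 : Fin d → ℝ) 1)
    (lam : ℝ) (hlam : 0 < lam)
    (hmin : ∀ I, B.valid I → ∀ j < B.numChildren I, lam * B.radius I ≤ B.radius (I ++ [j]))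
    (ε : ℝ) (hε : ε ∈ Set.Ioo (0 : ℝ) 1)
    (f : (Fin d → ℝ) → (Fin d → ℝ))
    (U : Set (Fin d → ℝ)) (hU : IsOpen U) (hUball : Metric.closedBall (0 : Fin d → ℝ) 1 ⊆ U)
    (hf : ContDiffOn ℝ 1 f U)
    (hDf : ∀ x ∈ Metric.closedBall (0 : Fin d → ℝ) 1,
      ‖fderiv ℝ f x - ContinuousLinearMap.id ℝ (Fin d → ℝ)‖ < ε) :
    ∃ R : BallSystem (Fin d → ℝ),
      R.numChildren = B.numChildren ∧
      (∀ I, B.valid I → R.center I = f (B.center I) ∧ R.radius I = (1 + ε) * B.radius I) ∧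
      R.IsSystemFor (f '' C) ∧
      B.thickness C / (1 + B.thickness C * ENNReal.ofReal (2 * ε / ((1 + ε) * lam)))
        ≤ R.thickness (f '' C) := by
  classical
  obtain ⟨hε0, hε1⟩ := hε
  haveI : Nonempty (Fin d) := ⟨⟨0, hd⟩⟩
  set cb : Set (Fin d → ℝ) := Metric.closedBall (0 : Fin d → ℝ) 1 with hcb
  -- `f` is well approximated by the identity on `cb`
  have key : ∀ x ∈ cb, ∀ y ∈ cb, ‖f y - f x - (y - x)‖ ≤ ε * ‖y - x‖ := by
    have hder : ∀ z ∈ cb, HasFDerivWithinAt (fun w => f w - w)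
        (fderiv ℝ f z - ContinuousLinearMap.id ℝ (Fin d → ℝ)) cb z := by
      intro z hz
      have hdz : DifferentiableAt ℝ f z :=
        (hf.contDiffAt (hU.mem_nhds (hUball hz))).differentiableAt one_ne_zero
      exact ((hdz.hasFDerivAt.sub (hasFDerivAt_id z)).hasFDerivWithinAt)
    intro x hx y hy
    have := (convex_closedBall (0 : Fin d → ℝ) 1).norm_image_sub_le_of_norm_hasFDerivWithin_le
      hder (fun z hz => (hDf z hz).le) hx hy
    calc ‖f y - f x - (y - x)‖ = ‖(f y - y) - (f x - x)‖ := by ring_nf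
      _ ≤ ε * ‖y - x‖ := this
  have lip : ∀ x ∈ cb, ∀ y ∈ cb, dist (f y) (f x) ≤ (1 + ε) * dist y x := by
    intro x hx y hy
    rw [dist_eq_norm, dist_eq_norm]
    calc ‖f y - f x‖ ≤ ‖f y - f x - (y - x)‖ + ‖y - x‖ := by
          have := norm_add_le (f y - f x - (y - x)) (y - x)
          simpa using this
      _ ≤ ε * ‖y - x‖ + ‖y - x‖ := by linarith [key x hx y hy]
      _ = (1 + ε) * ‖y - x‖ := by ring
  have hball_sub : ∀ I, B.valid I → B.ball I ⊆ cb := by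
    intro I hI
    have := BallSystem.ball_subset_take hI 0
    rw [List.take_zero] at this
    exact this.trans hroot
  have hcenter_cb : ∀ I, B.valid I → B.center I ∈ cb :=
    fun I hI => hball_sub I hI (B.center_mem_ball I)
  have hCne : C.Nonempty := BallSystem.nonempty_of_isSystemFor hB
  -- the image system
  let R : BallSystem (Fin d → ℝ) :=
  { center := fun I => f (B.center (B.trunc I))
    radius := fun I => (1 + ε) * B.radius (B.trunc I) *
      (1 / 2 : ℝ) ^ (I.length - (B.trunc I).length)
    numChildren := B.numChildren
    radius_pos := by
      intro I
      have := B.radius_pos (B.trunc I)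
      positivity
    numChildren_pos := B.numChildren_pos
    child_subset := by
      intro I i hi
      by_cases hval : B.valid I
      · have hvi : B.valid (I ++ [i]) := BallSystem.valid_append_iff.mpr ⟨hval, hi⟩
        simp only [B.trunc_of_valid hval, B.trunc_of_valid hvi, Nat.sub_self, pow_zero,
          mul_one]
        have hdx : dist (B.center (I ++ [i])) (B.center I) + B.radius (I ++ [i])
            ≤ B.radius I :=
          closedBall_subset_closedBall_dist (B.radius_pos _) (B.child_subset I i hi)
        have hld : dist (f (B.center (I ++ [i]))) (f (B.center I))
            ≤ (1 + ε) * dist (B.center (I ++ [i])) (B.center I) :=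
          lip _ (hcenter_cb I hval) _ (hcenter_cb _ hvi)
        apply Metric.closedBall_subset_closedBall'
        nlinarith [dist_nonneg (x := B.center (I ++ [i])) (y := B.center I)]
      · rw [B.trunc_append_of_not_valid hval i]
        apply Metric.closedBall_subset_closedBall
        have hlen : (I ++ [i]).length - (B.trunc I).length
            = (I.length - (B.trunc I).length) + 1 := by
          have := B.trunc_length_le I
          simp only [List.length_append, List.length_singleton]
          omega
        rw [hlen, pow_succ]
        have h1 : (0:ℝ) < (1 + ε) * B.radius (B.trunc I) := by
          have := B.radius_pos (B.trunc I); positivity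
        have h2 : (0:ℝ) < (1 / 2 : ℝ) ^ (I.length - (B.trunc I).length) := by positivity
        nlinarith
    radius_tendsto := by
      intro ω
      set W : ℕ → List ℕ := fun n => List.ofFn (fun k : Fin n => ω k) with hW
      have hWlen : ∀ n, (W n).length = n := fun n => by simp [hW]
      have hWstep : ∀ n, W (n + 1) = W n ++ [ω n] := by
        intro n
        show List.ofFn (fun k : Fin (n + 1) => ω k)
          = List.ofFn (fun k : Fin n => ω k) ++ [ω n]
        rw [List.ofFn_succ']
        simp [List.concat_eq_append, Fin.last]
      have htake : ∀ n m, n ≤ m → (W m).take n = W n := by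
        intro n m hnm
        induction m with
        | zero =>
          have : n = 0 := Nat.le_zero.mp hnm
          subst this; simp [hW]
        | succ m ih =>
          rcases eq_or_lt_of_le hnm with h | h
          · rw [h, List.take_of_length_le (le_of_eq (hWlen _))]
          · rw [hWstep m, List.take_append_of_le_length (by rw [hWlen]; omega),
              ih (by omega)]
      show Filter.Tendsto (fun n => (1 + ε) * B.radius (B.trunc (W n)) *
        (1 / 2 : ℝ) ^ ((W n).length - (B.trunc (W n)).length)) Filter.atTop (nhds 0)
      by_cases hall : ∀ n, B.valid (W n)
      · have heq : ∀ n, (1 + ε) * B.radius (B.trunc (W n)) *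
            (1 / 2 : ℝ) ^ ((W n).length - (B.trunc (W n)).length)
            = (1 + ε) * B.radius (W n) := by
          intro n
          rw [B.trunc_of_valid (hall n), Nat.sub_self, pow_zero, mul_one]
        have := (B.radius_tendsto ω).const_mul (1 + ε)
        rw [mul_zero] at this
        exact Filter.Tendsto.congr (fun n => (heq n).symm) this
      · push_neg at hall
        obtain ⟨N, hN⟩ := hall
        have hnv : ∀ m, N ≤ m → ¬ B.valid (W m) := by
          intro m hm hv
          exact hN (by rw [← htake N m hm]; exact BallSystem.valid_take hv N)
        have htr : ∀ m, N ≤ m → B.trunc (W m) = B.trunc (W N) := by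
          intro m hm
          induction m, hm using Nat.le_induction with
          | base => rfl
          | succ m hm ih =>
            rw [hWstep m, B.trunc_append_of_not_valid (hnv m hm) (ω m), ih]
        set J := B.trunc (W N) with hJ
        set t := J.length with ht
        set c : ℝ := (1 + ε) * B.radius J * 2 ^ t with hc
        apply Filter.Tendsto.congr' (f₁ := fun n => c * (1 / 2 : ℝ) ^ n)
        · filter_upwards [Filter.eventually_ge_atTop (max N t)] with n hn
          have hnN : N ≤ n := le_trans (le_max_left _ _) hn
          have hnt : t ≤ n := le_trans (le_max_right _ _) hn
          rw [htr n hnN, hWlen n]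
          have h1 : ((1:ℝ)/2) ^ (n - t) * (1/2) ^ t = (1/2) ^ n := by
            rw [← pow_add]; congr 1; omega
          have h2 : ((1:ℝ)/2) ^ t * 2 ^ t = 1 := by
            rw [← mul_pow]; norm_num
          have h3 : ((1:ℝ)/2) ^ (n - t) = (1/2) ^ n * 2 ^ t := by
            calc ((1:ℝ)/2) ^ (n - t) = (1/2) ^ (n - t) * ((1/2) ^ t * 2 ^ t) := by
                  rw [h2, mul_one]
              _ = ((1/2) ^ (n - t) * (1/2) ^ t) * 2 ^ t := by ring
              _ = (1/2) ^ n * 2 ^ t := by rw [h1]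
          rw [hc, h3]
          ring
        · have : Filter.Tendsto (fun n => ((1:ℝ)/2) ^ n) Filter.atTop (nhds 0) := by
            apply tendsto_pow_atTop_nhds_zero_of_lt_one <;> norm_num
          have := this.const_mul c
          rwa [mul_zero] at this }
  have hRc : ∀ I, B.valid I → R.center I = f (B.center I) ∧
      R.radius I = (1 + ε) * B.radius I := by
    intro I h
    constructor
    · show f (B.center (B.trunc I)) = f (B.center I)
      rw [B.trunc_of_valid h]
    · show (1 + ε) * B.radius (B.trunc I) *
        (1 / 2 : ℝ) ^ (I.length - (B.trunc I).length) = (1 + ε) * B.radius I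
      rw [B.trunc_of_valid h, Nat.sub_self, pow_zero, mul_one]
  have hRball : ∀ I, B.valid I →
      R.ball I = Metric.closedBall (f (B.center I)) ((1 + ε) * B.radius I) := by
    intro I h
    show Metric.closedBall (R.center I) (R.radius I) = _
    rw [(hRc I h).1, (hRc I h).2]
  -- R is a system for f '' C
  have hRsys : R.IsSystemFor (f '' C) := by
    apply subset_antisymm
    · rintro _ ⟨x, hxC, rfl⟩
      refine Set.mem_iInter.mpr fun n => ?_
      have hx' : x ∈ ⋂ n : ℕ, ⋃ I ∈ {I : List ℕ | B.valid I ∧ I.length = n}, B.ball I := by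
        rw [← hB]; exact hxC
      obtain ⟨I, hI, hxI⟩ := Set.mem_iUnion₂.mp (Set.mem_iInter.mp hx' n)
      refine Set.mem_iUnion₂.mpr ⟨I, ⟨hI.1, hI.2⟩, ?_⟩
      rw [hRball I hI.1, Metric.mem_closedBall]
      calc dist (f x) (f (B.center I)) ≤ (1 + ε) * dist x (B.center I) :=
            lip _ (hcenter_cb I hI.1) _ (hCsub hxC)
        _ ≤ (1 + ε) * B.radius I := by
            have : dist x (B.center I) ≤ B.radius I := hxI
            nlinarith
    · intro y hy
      set T : Set (List ℕ) := {I | B.valid I ∧ y ∈ R.ball I} with hT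
      obtain ⟨J, hJlen, hJstep, hJT⟩ := B.konig T
        (fun I hI => hI.1)
        (by
          rintro I ⟨hIv, hIy⟩ n
          exact ⟨BallSystem.valid_take hIv n, BallSystem.ball_subset_take (B := R) hIv n hIy⟩)
        (by
          intro n
          obtain ⟨I, hI, hyI⟩ := Set.mem_iUnion₂.mp (Set.mem_iInter.mp hy n)
          exact ⟨I, ⟨hI.1, hyI⟩, hI.2⟩)
      obtain ⟨x, hxC, hxball, hrad⟩ := BallSystem.branch_limit hB J hJlen hJstep
        (fun n => (hJT n).1)
      have hdy : ∀ n, dist y (f x) ≤ 2 * (1 + ε) * B.radius (J n) := by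
        intro n
        have h1 : dist y (f (B.center (J n))) ≤ (1 + ε) * B.radius (J n) := by
          have := (hJT n).2
          rw [hRball (J n) (hJT n).1, Metric.mem_closedBall] at this
          exact this
        have h2 : dist (f (B.center (J n))) (f x) ≤ (1 + ε) * B.radius (J n) := by
          have hxcb : x ∈ cb := hCsub hxC
          have := lip x hxcb (B.center (J n)) (hcenter_cb _ (hJT n).1)
          have hdc : dist (B.center (J n)) x ≤ B.radius (J n) := by
            rw [dist_comm]; exact hxball n
          nlinarith
        calc dist y (f x) ≤ dist y (f (B.center (J n))) + dist (f (B.center (J n))) (f x) :=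
              dist_triangle _ _ _
          _ ≤ 2 * (1 + ε) * B.radius (J n) := by linarith
      have hzero : dist y (f x) ≤ 0 := by
        have htend : Filter.Tendsto (fun n => 2 * (1 + ε) * B.radius (J n))
            Filter.atTop (nhds 0) := by
          have := hrad.const_mul (2 * (1 + ε))
          rwa [mul_zero] at this
        exact ge_of_tendsto' htend hdy
      exact ⟨x, hxC, (dist_le_zero.mp hzero).symm⟩
  refine ⟨R, rfl, hRc, hRsys, ?_⟩
  -- the thickness estimate
  refine le_iInf ?_
  rintro ⟨I, hIv⟩
  have hIv : B.valid I := hIv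
  haveI : Nonempty (Fin (B.numChildren I)) := ⟨⟨0, B.numChildren_pos I⟩⟩
  set r := B.radius I with hr
  set m := B.minChildRadius I with hm
  set hh := B.h C I with hhh
  have hr0 : 0 < r := B.radius_pos I
  have hm1 : lam * r ≤ m := le_ciInf fun j => hmin I hIv j.1 j.2
  have hm0 : 0 < m := lt_of_lt_of_le (by positivity) hm1
  have hh0 : 0 ≤ hh := B.h_nonneg C I
  -- min child radius of R
  have hm2 : R.minChildRadius I = (1 + ε) * m := by
    have : ∀ j : Fin (R.numChildren I), R.radius (I ++ [j.1])
        = (1 + ε) * B.radius (I ++ [j.1]) := by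
      intro j
      exact (hRc _ (BallSystem.valid_append_iff.mpr ⟨hIv, j.2⟩)).2
    calc R.minChildRadius I = ⨅ j : Fin (B.numChildren I), (1 + ε) * B.radius (I ++ [j.1]) :=
          iInf_congr this
      _ = (1 + ε) * m := (Real.mul_iInf_of_nonneg (by positivity) _).symm
  -- bound on h for R
  have hm3 : R.h (f '' C) I ≤ (1 + ε) * hh + 2 * ε * r := by
    apply BallSystem.h_le (by positivity)
    intro x hx
    rw [hRball I hIv, Metric.mem_closedBall, dist_eq_norm] at hx
    set z := B.center I with hz
    set v : Fin d → ℝ := x - f z with hv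
    have hvnorm : ‖v‖ ≤ (1 + ε) * r := hx
    set s : ℝ := (1 + ε)⁻¹ with hs
    have hs0 : 0 < s := by positivity
    have hs1 : s * (1 + ε) = 1 := inv_mul_cancel₀ (by positivity)
    set w : Fin d → ℝ := z + s • v with hw
    have hwz : w - z = s • v := by rw [hw]; abel
    have hwball : w ∈ B.ball I := by
      rw [BallSystem.ball, Metric.mem_closedBall, dist_eq_norm, hwz, norm_smul,
        Real.norm_eq_abs, abs_of_pos hs0]
      calc s * ‖v‖ ≤ s * ((1 + ε) * r) := by nlinarith
        _ = r := by rw [← mul_assoc, hs1, one_mul]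
    have hwcb : w ∈ cb := hball_sub I hIv hwball
    have hzcb : z ∈ cb := hcenter_cb I hIv
    obtain ⟨c, hcC, hcdist⟩ := hCc.exists_infDist_eq_dist hCne w
    have hwc : dist w c ≤ hh := by
      rw [← hcdist]; exact BallSystem.infDist_le_h hwball
    have hcc : c ∈ cb := hCsub hcC
    -- distance from x to f w
    have e1 : ‖f w - f z - (w - z)‖ ≤ ε * ‖w - z‖ := key z hzcb w hwcb
    have e2 : ‖w - z‖ = s * ‖v‖ := by
      rw [hwz, norm_smul, Real.norm_eq_abs, abs_of_pos hs0]
    have e3 : x - f w = (v - s • v) - (f w - f z - (w - z)) := by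
      rw [hwz, hv]; abel
    have e4 : dist x (f w) ≤ 2 * ε * r := by
      rw [dist_eq_norm, e3]
      calc ‖(v - s • v) - (f w - f z - (w - z))‖
          ≤ ‖v - s • v‖ + ‖f w - f z - (w - z)‖ := norm_sub_le _ _
        _ ≤ (1 - s) * ‖v‖ + ε * (s * ‖v‖) := by
            have h5 : ‖v - s • v‖ = (1 - s) * ‖v‖ := by
              rw [← one_smul ℝ v, smul_smul, ← sub_smul]
              rw [norm_smul, Real.norm_eq_abs, abs_of_nonneg (by nlinarith)]
              simp [mul_one]
            rw [h5]
            have := e1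
            rw [e2] at this
            linarith
        _ ≤ 2 * ε * r := by
            have h1s : 1 - s = ε * s := by nlinarith [hs1]
            have h6 : ε * s * ‖v‖ ≤ ε * r := by
              calc ε * s * ‖v‖ ≤ ε * s * ((1 + ε) * r) :=
                    mul_le_mul_of_nonneg_left hvnorm (le_of_lt (mul_pos hε0 hs0))
                _ = (s * (1 + ε)) * (ε * r) := by ring
                _ = ε * r := by rw [hs1, one_mul]
            rw [h1s]
            linarith
    have e5 : dist (f w) (f c) ≤ (1 + ε) * hh := by
      have := lip c hcc w hwcb
      nlinarith [dist_nonneg (x := w) (y := c)]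
    calc infDist x (f '' C) ≤ dist x (f c) := infDist_le_dist_of_mem ⟨c, hcC, rfl⟩
      _ ≤ dist x (f w) + dist (f w) (f c) := dist_triangle _ _ _
      _ ≤ (1 + ε) * hh + 2 * ε * r := by linarith
  -- now the ENNReal computation
  set τ := B.thickness C with hτdef
  set A := ENNReal.ofReal m with hA
  set H := ENNReal.ofReal hh with hH
  set c0 := ENNReal.ofReal (2 * ε / ((1 + ε) * lam)) with hc0
  set e := ENNReal.ofReal (1 + ε) with he
  have hτle : τ ≤ A / H := iInf_le (ι := {I : List ℕ // B.valid I}) _ ⟨I, hIv⟩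
  have hA0 : A ≠ 0 := by
    rw [hA, ne_eq, ENNReal.ofReal_eq_zero, not_le]; exact hm0
  have hAtop : A ≠ ⊤ := ENNReal.ofReal_ne_top
  have hHtop : H ≠ ⊤ := ENNReal.ofReal_ne_top
  have hc00 : c0 ≠ 0 := by
    rw [hc0]
    simp only [ne_eq, ENNReal.ofReal_eq_zero, not_le]
    positivity
  have hc0top : c0 ≠ ⊤ := ENNReal.ofReal_ne_top
  have he0 : e ≠ 0 := by
    rw [he, ne_eq, ENNReal.ofReal_eq_zero, not_le]; positivity
  have hetop : e ≠ ⊤ := ENNReal.ofReal_ne_top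
  rw [hm2]
  -- rewrite the RHS denominator bound
  have hstep1 : ENNReal.ofReal ((1 + ε) * m) / ENNReal.ofReal ((1 + ε) * hh + (2 * ε / lam) * m)
      ≤ ENNReal.ofReal ((1 + ε) * m) / ENNReal.ofReal (R.h (f '' C) I) := by
    apply ENNReal.div_le_div_left
    apply ENNReal.ofReal_le_ofReal
    calc R.h (f '' C) I ≤ (1 + ε) * hh + 2 * ε * r := hm3
      _ ≤ (1 + ε) * hh + (2 * ε / lam) * m := by
          have : 2 * ε * r ≤ (2 * ε / lam) * m := by
            rw [div_mul_eq_mul_div, le_div_iff₀ hlam]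
            nlinarith
          linarith
  refine le_trans ?_ hstep1
  -- simplify the middle quantity
  have hmid : ENNReal.ofReal ((1 + ε) * m) / ENNReal.ofReal ((1 + ε) * hh + (2 * ε / lam) * m)
      = A / (H + c0 * A) := by
    have h1 : ENNReal.ofReal ((1 + ε) * m) = e * A := by
      rw [he, hA, ← ENNReal.ofReal_mul (by positivity)]
    have h2 : (2 * ε / lam) * m = (1 + ε) * ((2 * ε / ((1 + ε) * lam)) * m) := by
      field_simp
    have h3 : ENNReal.ofReal ((1 + ε) * hh + (2 * ε / lam) * m)
        = e * (H + c0 * A) := by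
      rw [h2]
      rw [ENNReal.ofReal_add (mul_nonneg (by positivity) hh0) (by positivity)]
      rw [ENNReal.ofReal_mul (le_of_lt (by positivity : (0:ℝ) < 1 + ε))]
      rw [ENNReal.ofReal_mul (le_of_lt (by positivity : (0:ℝ) < 1 + ε))]
      rw [ENNReal.ofReal_mul (by positivity : (0:ℝ) ≤ 2 * ε / ((1 + ε) * lam))]
      rw [mul_add, he, hH, hc0, hA]
    rw [h1, h3]
    exact ENNReal.mul_div_mul_left A (H + c0 * A) he0 hetop
  rw [hmid]
  -- final inequality : τ / (1 + τ c0) ≤ A / (H + c0 A)  given  τ ≤ A / H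
  by_cases hH0 : H = 0
  · -- RHS = 1 / c0
    have hrhs : A / (H + c0 * A) = 1 / c0 := by
      rw [hH0, zero_add]
      rw [show A = A * 1 from (mul_one A).symm]
      rw [show c0 * (A * 1) = A * c0 from by ring]
      rw [ENNReal.mul_div_mul_left 1 c0 hA0 hAtop]
    rw [hrhs]
    rcases eq_or_ne τ ⊤ with hτtop | hτtop
    · rw [hτtop]
      have : (1 : ℝ≥0∞) + ⊤ * c0 = ⊤ := by
        rw [ENNReal.top_mul hc00]; simp
      rw [this, ENNReal.div_top]
      exact zero_le
    · rcases eq_or_ne τ 0 with hτ0 | hτ0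
      · rw [hτ0, ENNReal.zero_div]; exact zero_le
      · calc τ / (1 + τ * c0) ≤ τ / (τ * c0) :=
              ENNReal.div_le_div_left le_add_self _
          _ = 1 / c0 := by
              rw [show τ / (τ * c0) = τ * 1 / (τ * c0) from by rw [mul_one]]
              exact ENNReal.mul_div_mul_left 1 c0 hτ0 hτtop
  · -- H ≠ 0 : cross multiply
    have hτtop : τ ≠ ⊤ := by
      intro h
      rw [h] at hτle
      have : A / H ≠ ⊤ := by
        simp only [ne_eq, ENNReal.div_eq_top]
        push_neg
        exact ⟨fun _ => hH0, fun h' => absurd h' hAtop⟩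
      exact this (top_le_iff.mp hτle)
    have hD2 : H + c0 * A ≠ 0 := by
      simp only [ne_eq, add_eq_zero]
      rintro ⟨h, -⟩; exact hH0 h
    have hD2top : H + c0 * A ≠ ⊤ := by
      simp only [ne_eq, ENNReal.add_eq_top, not_or]
      exact ⟨hHtop, ENNReal.mul_ne_top hc0top hAtop⟩
    have hden : (1 : ℝ≥0∞) + τ * c0 ≠ 0 := by
      intro h
      rw [add_eq_zero] at h
      exact one_ne_zero h.1
    have hdentop : (1 : ℝ≥0∞) + τ * c0 ≠ ⊤ := by
      simp only [ne_eq, ENNReal.add_eq_top, not_or]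
      exact ⟨ENNReal.one_ne_top, ENNReal.mul_ne_top hτtop hc0top⟩
    rw [ENNReal.le_div_iff_mul_le (Or.inl hD2) (Or.inl hD2top)]
    rw [div_eq_mul_inv, mul_right_comm, ← div_eq_mul_inv]
    rw [ENNReal.div_le_iff hden hdentop]
    have hτH : τ * H ≤ A := by
      calc τ * H ≤ (A / H) * H := mul_le_mul_left hτle H
        _ = A := ENNReal.div_mul_cancel hH0 hHtop
    calc τ * (H + c0 * A) = τ * H + τ * c0 * A := by ring
      _ ≤ A + τ * c0 * A := add_le_add_left hτH _
      _ = A * (1 + τ * c0) := by ring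
end
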